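/- Let $\Gamma$ be a countable group with a fixed enumeration $\Gamma = (\gamma_s)_{s=1}^\infty$ and $(X,\mu)$ a standard probability space. Let $a_n, a, b_n, b$ ($n \in \mathbb{N}$) be measure-preserving actions of $\Gamma$ on $(X,\mu)$ such that for every $t \in \mathbb{N}$, $\sup_k d_H(C_{t,k}(a_n), C_{t,k}(a)) \to 0$ and $\sup_k d_H(C_{t,k}(b_n), C_{t,k}(b)) \to 0$ as $n \to \infty$. Then for every $t \in \mathbb{N}$, $\sup_k d_H(C_{t,k}(a_n \times b_n), C_{t,k}(a \times b)) \to 0$ as $n \to \infty$, where $a \times b$ denotes the diagonal product action of $\Gamma$ on $(X \times X, \mu \otimes \mu)$ given by $\gamma^{a \times b}(x,y) = (\gamma^a x, \gamma^b y)$ and its sets $C_{t,k}$ are formed using measurable partitions of $X \times X$. -/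

import Mathlib

open MeasureTheory Metric Filter

noncomputable section

/-- A measure-preserving action of a group `Γ` on a measure space `(X, μ)`. -/
structure MPAction (Γ : Type*) [Group Γ] (X : Type*) [MeasurableSpace X]
    (μ : Measure X) where
  toFun : Γ → X → X
  measurePreserving : ∀ γ : Γ, MeasurePreserving (toFun γ) μ μ
  map_one : ∀ x : X, toFun 1 x = x
  map_mul : ∀ (γ δ : Γ) (x : X), toFun (γ * δ) x = toFun γ (toFun δ x)

/-- The diagonal product action `a × b` on `(X × X, μ ⊗ μ)`:
`γ^{a×b}(x, y) = (γᵃx, γᵇy)`. -/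
def MPAction.prod {Γ X : Type*} [Group Γ] [MeasurableSpace X]
    {μ : Measure X} [SFinite μ] (a b : MPAction Γ X μ) :
    MPAction Γ (X × X) (μ.prod μ) where
  toFun γ := Prod.map (a.toFun γ) (b.toFun γ)
  measurePreserving γ := (a.measurePreserving γ).prod (b.measurePreserving γ)
  map_one x := by simp [Prod.map, a.map_one, b.map_one]
  map_mul γ δ x := by simp [Prod.map, a.map_mul, b.map_mul]

/-- A finite measurable partition: the pieces are measurable, pairwise disjoint, and
cover the whole space. -/
def IsPartition {Y : Type*} [MeasurableSpace Y] {n : ℕ} (A : Fin n → Set Y) : Prop :=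
  (∀ i, MeasurableSet (A i)) ∧ (∀ i j : Fin n, i ≠ j → Disjoint (A i) (A j)) ∧
    (⋃ i, A i) = Set.univ

/-- The point `M^𝒜_{t,k}(c) ∈ [0,1]^{t × k × k}` whose `(s, l, m)` coordinate is
`ν(γₛᶜ A_l ∩ A_m)`, where `(γₛ)` is the fixed enumeration `e` of `Γ`. The ambient space
`[0,1]^{t × k × k}` carries the metric given by the sum of coordinate distances, i.e. the
`ℓ¹` (taxicab) metric, realized by `PiLp 1`. -/
def Mpoint {Γ Y : Type*} [Group Γ] [MeasurableSpace Y] (ν : Measure Y) (e : ℕ → Γ)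
    (c : Γ → Y → Y) (t k : ℕ) (A : Fin k → Set Y) :
    PiLp 1 (fun _ : Fin t × Fin k × Fin k => ℝ) :=
  WithLp.toLp 1 (fun p => (ν (c (e p.1) ⁻¹' A p.2.1 ∩ A p.2.2)).toReal)

/-- `C_{t,k}(c)`: the closure in `[0,1]^{t × k × k}` (with the sum metric) of the set of
points `M^𝒜_{t,k}(c)` over all measurable partitions `𝒜` of the space into `k` pieces. -/
def Cset {Γ Y : Type*} [Group Γ] [MeasurableSpace Y] (ν : Measure Y) (e : ℕ → Γ)
    (c : Γ → Y → Y) (t k : ℕ) : Set (PiLp 1 (fun _ : Fin t × Fin k × Fin k => ℝ)) :=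
  closure {x | ∃ A : Fin k → Set Y, IsPartition A ∧ x = Mpoint ν e c t k A}

open scoped symmDiff

namespace S12

variable {Y : Type*} [MeasurableSpace Y]

lemma isPartition_fibers {k : ℕ} {g : Y → Fin k} (hg : Measurable g) :
    IsPartition (fun i => g ⁻¹' {i}) := by
  refine ⟨fun i => hg (measurableSet_singleton i), fun i j hij => ?_, ?_⟩
  · refine Set.disjoint_left.2 fun y hy hy' => ?_
    exact hij (by simp only [Set.mem_preimage, Set.mem_singleton_iff] at hy hy'; rw [← hy, hy'])
  · ext y; simp only [Set.mem_iUnion, Set.mem_preimage, Set.mem_singleton_iff, Set.mem_univ,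
      iff_true]
    exact ⟨g y, rfl⟩

lemma exists_classifier {k : ℕ} {A : Fin k → Set Y} (hA : IsPartition A) :
    ∃ g : Y → Fin k, Measurable g ∧ ∀ i, A i = g ⁻¹' {i} := by
  have hcov : ∀ y : Y, ∃ i, y ∈ A i := by
    intro y
    have := hA.2.2
    have hy : y ∈ ⋃ i, A i := this ▸ Set.mem_univ y
    exact Set.mem_iUnion.1 hy
  classical
  have hmem : ∀ y : Y, y ∈ A ((hcov y).choose) := fun y => (hcov y).choose_spec
  have hfib : ∀ i, A i = (fun y => (hcov y).choose) ⁻¹' {i} := by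
    intro i; ext y
    simp only [Set.mem_preimage, Set.mem_singleton_iff]
    constructor
    · intro hy
      by_contra hne
      exact Set.disjoint_left.1 (hA.2.1 _ _ hne) (hmem y) hy
    · intro hy; exact hy ▸ hmem y
  refine ⟨fun y => (hcov y).choose, ?_, hfib⟩
  exact measurable_to_countable' fun i => (hfib i) ▸ hA.1 i


variable {Γ : Type*} [Group Γ]

lemma sum_measure_inter_fiber (ν : Measure Y) {k : ℕ} {g : Y → Fin k}
    (hg : Measurable g) {S : Set Y} (hS : MeasurableSet S) :
    ∑ m : Fin k, ν (S ∩ g ⁻¹' {m}) = ν S := by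
  have hU : ⋃ m, S ∩ g ⁻¹' {m} = S := by
    ext y; simp
  have := measure_iUnion (μ := ν) (f := fun m : Fin k => S ∩ g ⁻¹' {m})
    (fun i j hij => Set.disjoint_left.2 (by
      intro y hy hy'
      simp only [Set.mem_inter_iff, Set.mem_preimage, Set.mem_singleton_iff] at hy hy'
      exact hij (by rw [← hy.2, hy'.2])))
    (fun m => hS.inter (hg (measurableSet_singleton m)))
  rw [hU, tsum_fintype] at this
  exact this.symm

lemma sum_J_eq_one (ν : Measure Y) [IsProbabilityMeasure ν] {k : ℕ} {g : Y → Fin k}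
    (hg : Measurable g) {f : Y → Y} (hf : Measurable f) :
    ∑ p : Fin k × Fin k, (ν ((g ∘ f) ⁻¹' {p.1} ∩ g ⁻¹' {p.2})).toReal = 1 := by
  have h : ∑ p : Fin k × Fin k, ν ((g ∘ f) ⁻¹' {p.1} ∩ g ⁻¹' {p.2}) = 1 := by
    rw [Fintype.sum_prod_type]
    have : ∀ l : Fin k, ∑ m : Fin k, ν ((g ∘ f) ⁻¹' {l} ∩ g ⁻¹' {m}) = ν ((g ∘ f) ⁻¹' {l}) :=
      fun l => sum_measure_inter_fiber ν hg ((hg.comp hf) (measurableSet_singleton l))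
    rw [Finset.sum_congr rfl fun l _ => this l]
    have := sum_measure_inter_fiber ν (g := g ∘ f) (hg.comp hf)
      (S := Set.univ) MeasurableSet.univ
    simp only [Set.univ_inter] at this
    rw [this, measure_univ]
  rw [← ENNReal.toReal_sum (fun p _ => measure_ne_top ν _), h, ENNReal.toReal_one]

lemma abs_toReal_measure_sub (ν : Measure Y) [IsFiniteMeasure ν] (A B : Set Y) :
    |(ν A).toReal - (ν B).toReal| ≤ (ν (A ∆ B)).toReal := by
  have key : ∀ C D : Set Y, (ν C).toReal - (ν D).toReal ≤ (ν (C ∆ D)).toReal := by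
    intro C D
    have hsub : C ⊆ D ∪ C ∆ D := by
      intro x hx
      by_cases hxD : x ∈ D
      · exact Set.mem_union_left _ hxD
      · exact Set.mem_union_right _ (by simp [Set.mem_symmDiff, hx, hxD])
    have h1 : ν C ≤ ν D + ν (C ∆ D) := le_trans (measure_mono hsub) (measure_union_le _ _)
    have h2 : (ν C).toReal ≤ (ν D).toReal + (ν (C ∆ D)).toReal := by
      have := ENNReal.toReal_mono (by finiteness) h1
      rwa [ENNReal.toReal_add (measure_ne_top ν D) (measure_ne_top ν _)] at this
    linarith
  rw [abs_sub_le_iff]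
  exact ⟨key A B, by simpa [symmDiff_comm] using key B A⟩

lemma abs_toReal_measure_inter_sub (ν : Measure Y) [IsFiniteMeasure ν] (S S' T T' : Set Y) :
    |(ν (S ∩ T)).toReal - (ν (S' ∩ T')).toReal| ≤ (ν (S ∆ S')).toReal + (ν (T ∆ T')).toReal := by
  have hsub : (S ∩ T) ∆ (S' ∩ T') ⊆ (S ∆ S') ∪ (T ∆ T') := by
    intro x hx
    simp only [Set.mem_symmDiff, Set.mem_inter_iff, Set.mem_union] at hx ⊢
    tauto
  calc |(ν (S ∩ T)).toReal - (ν (S' ∩ T')).toReal| ≤ (ν ((S ∩ T) ∆ (S' ∩ T'))).toReal :=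
        abs_toReal_measure_sub ν _ _
    _ ≤ ((ν (S ∆ S')) + ν (T ∆ T')).toReal :=
        ENNReal.toReal_mono (by finiteness) (le_trans (measure_mono hsub) (measure_union_le _ _))
    _ = (ν (S ∆ S')).toReal + (ν (T ∆ T')).toReal :=
        ENNReal.toReal_add (measure_ne_top ν _) (measure_ne_top ν _)

lemma dist_pilp {t k : ℕ} (x y : PiLp 1 (fun _ : Fin t × Fin k × Fin k => ℝ)) :
    dist x y = ∑ p, |x p - y p| := by
  rw [PiLp.dist_eq_sum]
  · simp [Real.dist_eq]
  · norm_num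

lemma Mpoint_apply (ν : Measure Y) (e : ℕ → Γ) (cf : Γ → Y → Y) (t k : ℕ)
    (g : Y → Fin k) (p : Fin t × Fin k × Fin k) :
    Mpoint ν e cf t k (fun i => g ⁻¹' {i}) p
      = (ν ((g ∘ cf (e p.1)) ⁻¹' {p.2.1} ∩ g ⁻¹' {p.2.2})).toReal := rfl

lemma dist_Mpoint_le_two_t (ν : Measure Y) [IsProbabilityMeasure ν] (e : ℕ → Γ)
    (cf cf' : Γ → Y → Y) (hcf : ∀ γ, Measurable (cf γ)) (hcf' : ∀ γ, Measurable (cf' γ))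
    {t k : ℕ} {g : Y → Fin k} (hg : Measurable g) :
    dist (Mpoint ν e cf t k (fun i => g ⁻¹' {i})) (Mpoint ν e cf' t k (fun i => g ⁻¹' {i}))
      ≤ 2 * t := by
  rw [dist_pilp]
  have hbd : ∀ p : Fin t × Fin k × Fin k,
      |Mpoint ν e cf t k (fun i => g ⁻¹' {i}) p - Mpoint ν e cf' t k (fun i => g ⁻¹' {i}) p|
        ≤ Mpoint ν e cf t k (fun i => g ⁻¹' {i}) p
          + Mpoint ν e cf' t k (fun i => g ⁻¹' {i}) p := by
    intro p
    have h1 : (0:ℝ) ≤ Mpoint ν e cf t k (fun i => g ⁻¹' {i}) p := ENNReal.toReal_nonneg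
    have h2 : (0:ℝ) ≤ Mpoint ν e cf' t k (fun i => g ⁻¹' {i}) p := ENNReal.toReal_nonneg
    rw [abs_le]; constructor <;> linarith
  calc ∑ p, |Mpoint ν e cf t k (fun i => g ⁻¹' {i}) p
        - Mpoint ν e cf' t k (fun i => g ⁻¹' {i}) p|
      ≤ ∑ p : Fin t × Fin k × Fin k, (Mpoint ν e cf t k (fun i => g ⁻¹' {i}) p
          + Mpoint ν e cf' t k (fun i => g ⁻¹' {i}) p) := Finset.sum_le_sum fun p _ => hbd p
    _ = ∑ s : Fin t, ∑ q : Fin k × Fin k,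
          ((ν ((g ∘ cf (e s)) ⁻¹' {q.1} ∩ g ⁻¹' {q.2})).toReal
            + (ν ((g ∘ cf' (e s)) ⁻¹' {q.1} ∩ g ⁻¹' {q.2})).toReal) := by
        rw [Fintype.sum_prod_type]; rfl
    _ = ∑ s : Fin t, (2:ℝ) := by
        refine Finset.sum_congr rfl fun s _ => ?_
        rw [Finset.sum_add_distrib, sum_J_eq_one ν hg (hcf (e s)), sum_J_eq_one ν hg (hcf' (e s))]
        norm_num
    _ = 2 * t := by simp [mul_comm]

lemma dist_Mpoint_le_symmDiff (ν : Measure Y) [IsProbabilityMeasure ν] (e : ℕ → Γ)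
    (cf : Γ → Y → Y) (hcf : ∀ γ, MeasurePreserving (cf γ) ν ν)
    {t k : ℕ} {g g' : Y → Fin k} (hg : Measurable g) (hg' : Measurable g') :
    dist (Mpoint ν e cf t k (fun i => g ⁻¹' {i})) (Mpoint ν e cf t k (fun i => g' ⁻¹' {i}))
      ≤ 2 * t * k * ∑ l : Fin k, (ν ((g ⁻¹' {l}) ∆ (g' ⁻¹' {l}))).toReal := by
  set d : Fin k → ℝ := fun l => (ν ((g ⁻¹' {l}) ∆ (g' ⁻¹' {l}))).toReal with hd
  rw [dist_pilp]
  have hbd : ∀ p : Fin t × Fin k × Fin k,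
      |Mpoint ν e cf t k (fun i => g ⁻¹' {i}) p - Mpoint ν e cf t k (fun i => g' ⁻¹' {i}) p|
        ≤ d p.2.1 + d p.2.2 := by
    intro p
    rw [Mpoint_apply, Mpoint_apply]
    refine le_trans (abs_toReal_measure_inter_sub ν _ _ _ _) ?_
    have hpre : ((g ∘ cf (e p.1)) ⁻¹' {p.2.1}) ∆ ((g' ∘ cf (e p.1)) ⁻¹' {p.2.1})
        = cf (e p.1) ⁻¹' ((g ⁻¹' {p.2.1}) ∆ (g' ⁻¹' {p.2.1})) := by
      rw [Set.preimage_symmDiff]; rfl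
    have hms : MeasurableSet ((g ⁻¹' {p.2.1}) ∆ (g' ⁻¹' {p.2.1})) :=
      (hg (measurableSet_singleton _)).symmDiff (hg' (measurableSet_singleton _))
    rw [hpre, (hcf (e p.1)).measure_preimage hms.nullMeasurableSet]
  calc ∑ p, |Mpoint ν e cf t k (fun i => g ⁻¹' {i}) p
        - Mpoint ν e cf t k (fun i => g' ⁻¹' {i}) p|
      ≤ ∑ p : Fin t × Fin k × Fin k, (d p.2.1 + d p.2.2) := Finset.sum_le_sum fun p _ => hbd p
    _ = ∑ _s : Fin t, ∑ q : Fin k × Fin k, (d q.1 + d q.2) := by rw [Fintype.sum_prod_type]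
    _ = ∑ _s : Fin t, (2 * k * ∑ l, d l) := by
        refine Finset.sum_congr rfl fun s _ => ?_
        rw [Finset.sum_add_distrib, Fintype.sum_prod_type]
        simp only [Finset.sum_const, Finset.card_univ, Fintype.card_fin, nsmul_eq_mul]
        rw [Fintype.sum_prod_type_right]
        simp only [Finset.sum_const, Finset.card_univ, Fintype.card_fin, nsmul_eq_mul]
        rw [← Finset.mul_sum]
        ring
    _ = 2 * t * k * ∑ l, d l := by
        simp only [Finset.sum_const, Finset.card_univ, Fintype.card_fin, nsmul_eq_mul]
        ring

lemma slice_est {k K : ℕ} (c : Fin K × Fin K → Fin k)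
    (A A' B B' : Fin K × Fin K → ℝ)
    (hA' : ∀ w, 0 ≤ A' w) (hB : ∀ w, 0 ≤ B w)
    (hBsum : ∑ w, B w = 1) (hA'sum : ∑ w, A' w = 1) :
    ∑ lm : Fin k × Fin k,
      |(∑ w : (Fin K × Fin K) × (Fin K × Fin K),
          if c w.1 = lm.1 ∧ c w.2 = lm.2 then A (w.1.1, w.2.1) * B (w.1.2, w.2.2) else 0)
        - ∑ w : (Fin K × Fin K) × (Fin K × Fin K),
          (if c w.1 = lm.1 ∧ c w.2 = lm.2 then A' (w.1.1, w.2.1) * B' (w.1.2, w.2.2) else 0)|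
      ≤ (∑ w, |A w - A' w|) + ∑ w, |B w - B' w| := by
  classical
  set W := (Fin K × Fin K) × (Fin K × Fin K)
  have step1 : ∀ lm : Fin k × Fin k,
      |(∑ w : W, if c w.1 = lm.1 ∧ c w.2 = lm.2 then A (w.1.1, w.2.1) * B (w.1.2, w.2.2) else 0)
        - ∑ w : W, (if c w.1 = lm.1 ∧ c w.2 = lm.2 then A' (w.1.1, w.2.1) * B' (w.1.2, w.2.2)
            else 0)|
      ≤ ∑ w : W, (if c w.1 = lm.1 ∧ c w.2 = lm.2 then
          |A (w.1.1, w.2.1) * B (w.1.2, w.2.2) - A' (w.1.1, w.2.1) * B' (w.1.2, w.2.2)| else 0) := by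
    intro lm
    rw [← Finset.sum_sub_distrib]
    refine le_trans (Finset.abs_sum_le_sum_abs _ _) (le_of_eq ?_)
    refine Finset.sum_congr rfl fun w _ => ?_
    by_cases h : c w.1 = lm.1 ∧ c w.2 = lm.2 <;> simp [h]
  have step2 : ∑ lm : Fin k × Fin k, ∑ w : W,
      (if c w.1 = lm.1 ∧ c w.2 = lm.2 then
        |A (w.1.1, w.2.1) * B (w.1.2, w.2.2) - A' (w.1.1, w.2.1) * B' (w.1.2, w.2.2)| else 0)
      = ∑ w : W, |A (w.1.1, w.2.1) * B (w.1.2, w.2.2) - A' (w.1.1, w.2.1) * B' (w.1.2, w.2.2)| := by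
    rw [Finset.sum_comm]
    refine Finset.sum_congr rfl fun w _ => ?_
    have : ∀ lm : Fin k × Fin k, (c w.1 = lm.1 ∧ c w.2 = lm.2) ↔ ((c w.1, c w.2) = lm) := by
      intro lm; rw [Prod.ext_iff]
    calc ∑ lm : Fin k × Fin k, (if c w.1 = lm.1 ∧ c w.2 = lm.2 then
            |A (w.1.1, w.2.1) * B (w.1.2, w.2.2) - A' (w.1.1, w.2.1) * B' (w.1.2, w.2.2)| else 0)
        = ∑ lm : Fin k × Fin k, (if (c w.1, c w.2) = lm then
            |A (w.1.1, w.2.1) * B (w.1.2, w.2.2) - A' (w.1.1, w.2.1) * B' (w.1.2, w.2.2)| else 0) := by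
          refine Finset.sum_congr rfl fun lm _ => ?_
          rw [if_congr (this lm) rfl rfl]
      _ = _ := by rw [Finset.sum_ite_eq]; simp
  have step3 : ∀ w : W,
      |A (w.1.1, w.2.1) * B (w.1.2, w.2.2) - A' (w.1.1, w.2.1) * B' (w.1.2, w.2.2)|
      ≤ |A (w.1.1, w.2.1) - A' (w.1.1, w.2.1)| * B (w.1.2, w.2.2)
        + A' (w.1.1, w.2.1) * |B (w.1.2, w.2.2) - B' (w.1.2, w.2.2)| := by
    intro w
    set a := A (w.1.1, w.2.1); set a' := A' (w.1.1, w.2.1)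
    set b := B (w.1.2, w.2.2); set b' := B' (w.1.2, w.2.2)
    have : a * b - a' * b' = (a - a') * b + a' * (b - b') := by ring
    rw [this]
    refine le_trans (abs_add_le _ _) ?_
    rw [abs_mul, abs_mul, abs_of_nonneg (hB _), abs_of_nonneg (hA' _)]
  have step4 : ∑ w : W, (|A (w.1.1, w.2.1) - A' (w.1.1, w.2.1)| * B (w.1.2, w.2.2)
        + A' (w.1.1, w.2.1) * |B (w.1.2, w.2.2) - B' (w.1.2, w.2.2)|)
      = (∑ w, |A w - A' w|) * (∑ w, B w) + (∑ w, A' w) * (∑ w, |B w - B' w|) := by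
    have factor : ∀ f g : Fin K × Fin K → ℝ,
        ∑ w : W, f (w.1.1, w.2.1) * g (w.1.2, w.2.2) = (∑ w, f w) * (∑ w, g w) := by
      intro f g
      rw [Fintype.sum_prod_type]
      calc ∑ w1 : Fin K × Fin K, ∑ w2 : Fin K × Fin K, f (w1.1, w2.1) * g (w1.2, w2.2)
          = ∑ u : Fin K, ∑ v : Fin K, ∑ u' : Fin K, ∑ v' : Fin K, f (u, u') * g (v, v') := by
            rw [Fintype.sum_prod_type]
            exact Finset.sum_congr rfl fun u _ => Finset.sum_congr rfl fun v _ => by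
              rw [Fintype.sum_prod_type]
        _ = ∑ u : Fin K, ∑ v : Fin K, (∑ u' : Fin K, f (u, u')) * (∑ v' : Fin K, g (v, v')) := by
            refine Finset.sum_congr rfl fun u _ => Finset.sum_congr rfl fun v _ => ?_
            rw [Finset.sum_mul_sum]
        _ = (∑ u : Fin K, ∑ u' : Fin K, f (u, u')) * (∑ v : Fin K, ∑ v' : Fin K, g (v, v')) := by
            rw [← Finset.sum_mul_sum]
        _ = (∑ w, f w) * (∑ w, g w) := by rw [← Fintype.sum_prod_type, ← Fintype.sum_prod_type]
    rw [Finset.sum_add_distrib, factor (fun w => |A w - A' w|) B, factor A' (fun w => |B w - B' w|)]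
  calc ∑ lm : Fin k × Fin k,
      |(∑ w : W, if c w.1 = lm.1 ∧ c w.2 = lm.2 then A (w.1.1, w.2.1) * B (w.1.2, w.2.2) else 0)
        - ∑ w : W, (if c w.1 = lm.1 ∧ c w.2 = lm.2 then A' (w.1.1, w.2.1) * B' (w.1.2, w.2.2)
            else 0)|
      ≤ ∑ lm : Fin k × Fin k, ∑ w : W, (if c w.1 = lm.1 ∧ c w.2 = lm.2 then
          |A (w.1.1, w.2.1) * B (w.1.2, w.2.2) - A' (w.1.1, w.2.1) * B' (w.1.2, w.2.2)| else 0) :=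
        Finset.sum_le_sum fun lm _ => step1 lm
    _ = ∑ w : W, |A (w.1.1, w.2.1) * B (w.1.2, w.2.2) - A' (w.1.1, w.2.1) * B' (w.1.2, w.2.2)| :=
        step2
    _ ≤ ∑ w : W, (|A (w.1.1, w.2.1) - A' (w.1.1, w.2.1)| * B (w.1.2, w.2.2)
        + A' (w.1.1, w.2.1) * |B (w.1.2, w.2.2) - B' (w.1.2, w.2.2)|) :=
        Finset.sum_le_sum fun w _ => step3 w
    _ = (∑ w, |A w - A' w|) * (∑ w, B w) + (∑ w, A' w) * (∑ w, |B w - B' w|) := step4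
    _ = (∑ w, |A w - A' w|) + ∑ w, |B w - B' w| := by rw [hBsum, hA'sum]; ring

variable {X : Type*} [MeasurableSpace X]

def Grid {K : ℕ} (q r : X → Fin K) : X × X → Fin K × Fin K := fun z => (q z.1, r z.2)

lemma measurable_grid {K : ℕ} {q r : X → Fin K} (hq : Measurable q) (hr : Measurable r) :
    Measurable (Grid q r) :=
  (hq.comp measurable_fst).prodMk (hr.comp measurable_snd)

lemma J_prod_formula (μ : Measure X) [IsProbabilityMeasure μ]
    {K k : ℕ} (q r : X → Fin K) (hq : Measurable q) (hr : Measurable r)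
    (c : Fin K × Fin K → Fin k) {fa fb : X → X} (hfa : Measurable fa) (hfb : Measurable fb)
    (l m : Fin k) :
    ((μ.prod μ) (((fun z => c (Grid q r z)) ∘ Prod.map fa fb) ⁻¹' {l}
        ∩ (fun z => c (Grid q r z)) ⁻¹' {m})).toReal
      = ∑ w : (Fin K × Fin K) × (Fin K × Fin K),
          if c w.1 = l ∧ c w.2 = m then
            (μ ((q ∘ fa) ⁻¹' {w.1.1} ∩ q ⁻¹' {w.2.1})).toReal
              * (μ ((r ∘ fb) ⁻¹' {w.1.2} ∩ r ⁻¹' {w.2.2})).toReal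
          else 0 := by
  classical
  set D : (Fin K × Fin K) × (Fin K × Fin K) → Set (X × X) := fun w =>
    ((q ∘ fa) ⁻¹' {w.1.1} ∩ q ⁻¹' {w.2.1}) ×ˢ ((r ∘ fb) ⁻¹' {w.1.2} ∩ r ⁻¹' {w.2.2}) with hD
  have hDmem : ∀ (z : X × X) (w : (Fin K × Fin K) × (Fin K × Fin K)),
      z ∈ D w ↔ (q (fa z.1) = w.1.1 ∧ r (fb z.2) = w.1.2) ∧ q z.1 = w.2.1 ∧ r z.2 = w.2.2 := by
    intro z w
    simp only [hD, Set.mem_prod, Set.mem_inter_iff, Set.mem_preimage, Function.comp_apply,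
      Set.mem_singleton_iff]
    tauto
  have key : ((fun z => c (Grid q r z)) ∘ Prod.map fa fb) ⁻¹' {l}
        ∩ (fun z => c (Grid q r z)) ⁻¹' {m}
      = ⋃ w : (Fin K × Fin K) × (Fin K × Fin K),
          if c w.1 = l ∧ c w.2 = m then D w else ∅ := by
    ext z
    simp only [Set.mem_inter_iff, Set.mem_preimage, Function.comp_apply, Set.mem_singleton_iff,
      Set.mem_iUnion, Prod.map_apply, Prod.map_fst, Prod.map_snd, Grid]
    constructor
    · rintro ⟨h1, h2⟩
      refine ⟨((q (fa z.1), r (fb z.2)), (q z.1, r z.2)), ?_⟩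
      rw [if_pos ⟨h1, h2⟩, hDmem]
      exact ⟨⟨rfl, rfl⟩, rfl, rfl⟩
    · rintro ⟨w, hw⟩
      by_cases hc : c w.1 = l ∧ c w.2 = m
      · rw [if_pos hc, hDmem] at hw
        obtain ⟨⟨e1, e2⟩, e3, e4⟩ := hw
        constructor
        · rw [show (q (fa z.1), r (fb z.2)) = w.1 by rw [e1, e2], hc.1]
        · rw [show (q z.1, r z.2) = w.2 by rw [e3, e4], hc.2]
      · rw [if_neg hc] at hw; exact absurd hw (Set.notMem_empty z)
  have hdisj : Pairwise (Function.onFun Disjoint fun w : (Fin K × Fin K) × (Fin K × Fin K) =>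
      if c w.1 = l ∧ c w.2 = m then D w else ∅) := by
    intro w w' hne
    refine Set.disjoint_left.2 fun z hz hz' => hne ?_
    simp only [Function.onFun] at hz hz'
    by_cases hc : c w.1 = l ∧ c w.2 = m
    · by_cases hc' : c w'.1 = l ∧ c w'.2 = m
      · rw [if_pos hc, hDmem] at hz
        rw [if_pos hc', hDmem] at hz'
        obtain ⟨⟨e1, e2⟩, e3, e4⟩ := hz
        obtain ⟨⟨f1, f2⟩, f3, f4⟩ := hz'
        have : w.1 = w'.1 := by
          rw [Prod.ext_iff]; exact ⟨e1 ▸ f1, e2 ▸ f2⟩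
        have h2 : w.2 = w'.2 := by
          rw [Prod.ext_iff]; exact ⟨e3 ▸ f3, e4 ▸ f4⟩
        exact Prod.ext this h2
      · rw [if_neg hc'] at hz'; exact absurd hz' (Set.notMem_empty z)
    · rw [if_neg hc] at hz; exact absurd hz (Set.notMem_empty z)
  have hmeas : ∀ w : (Fin K × Fin K) × (Fin K × Fin K),
      MeasurableSet (if c w.1 = l ∧ c w.2 = m then D w else ∅) := by
    intro w
    split
    · exact (((hq.comp hfa) (measurableSet_singleton _)).inter
          (hq (measurableSet_singleton _))).prod
        (((hr.comp hfb) (measurableSet_singleton _)).inter (hr (measurableSet_singleton _)))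
    · exact MeasurableSet.empty
  rw [key, measure_iUnion hdisj hmeas, tsum_fintype,
    ENNReal.toReal_sum (fun w _ => by split <;> finiteness)]
  refine Finset.sum_congr rfl fun w _ => ?_
  by_cases hc : c w.1 = l ∧ c w.2 = m
  · rw [if_pos hc, if_pos hc, hD]
    rw [Measure.prod_prod, ENNReal.toReal_mul]
  · rw [if_neg hc, if_neg hc, measure_empty, ENNReal.toReal_zero]

lemma dist_Mpoint_prod_le (μ : Measure X) [IsProbabilityMeasure μ] (e : ℕ → Γ)
    {K k t : ℕ} {q r q' r' : X → Fin K}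
    (hq : Measurable q) (hr : Measurable r) (hq' : Measurable q') (hr' : Measurable r')
    (c : Fin K × Fin K → Fin k)
    {α β α' β' : Γ → X → X}
    (hα : ∀ γ, Measurable (α γ)) (hβ : ∀ γ, Measurable (β γ))
    (hα' : ∀ γ, Measurable (α' γ)) (hβ' : ∀ γ, Measurable (β' γ)) :
    dist (Mpoint (μ.prod μ) e (fun γ => Prod.map (α γ) (β γ)) t k
        (fun i => (fun z => c (Grid q r z)) ⁻¹' {i}))
      (Mpoint (μ.prod μ) e (fun γ => Prod.map (α' γ) (β' γ)) t k
        (fun i => (fun z => c (Grid q' r' z)) ⁻¹' {i}))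
    ≤ dist (Mpoint μ e α t K (fun i => q ⁻¹' {i})) (Mpoint μ e α' t K (fun i => q' ⁻¹' {i}))
      + dist (Mpoint μ e β t K (fun i => r ⁻¹' {i})) (Mpoint μ e β' t K (fun i => r' ⁻¹' {i})) := by
  classical
  rw [dist_pilp, dist_pilp, dist_pilp]
  rw [Fintype.sum_prod_type, Fintype.sum_prod_type, Fintype.sum_prod_type,
    ← Finset.sum_add_distrib]
  refine Finset.sum_le_sum fun s _ => ?_
  set A : Fin K × Fin K → ℝ :=
    fun uu' => (μ ((q ∘ α (e s)) ⁻¹' {uu'.1} ∩ q ⁻¹' {uu'.2})).toReal with hA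
  set A' : Fin K × Fin K → ℝ :=
    fun uu' => (μ ((q' ∘ α' (e s)) ⁻¹' {uu'.1} ∩ q' ⁻¹' {uu'.2})).toReal with hA'
  set B : Fin K × Fin K → ℝ :=
    fun vv' => (μ ((r ∘ β (e s)) ⁻¹' {vv'.1} ∩ r ⁻¹' {vv'.2})).toReal with hB
  set B' : Fin K × Fin K → ℝ :=
    fun vv' => (μ ((r' ∘ β' (e s)) ⁻¹' {vv'.1} ∩ r' ⁻¹' {vv'.2})).toReal with hB'
  have e1 : ∀ lm : Fin k × Fin k,
      Mpoint (μ.prod μ) e (fun γ => Prod.map (α γ) (β γ)) t k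
        (fun i => (fun z => c (Grid q r z)) ⁻¹' {i}) (s, lm)
      = ∑ w : (Fin K × Fin K) × (Fin K × Fin K),
          if c w.1 = lm.1 ∧ c w.2 = lm.2 then A (w.1.1, w.2.1) * B (w.1.2, w.2.2) else 0 :=
    fun lm => J_prod_formula μ q r hq hr c (hα (e s)) (hβ (e s)) lm.1 lm.2
  have e2 : ∀ lm : Fin k × Fin k,
      Mpoint (μ.prod μ) e (fun γ => Prod.map (α' γ) (β' γ)) t k
        (fun i => (fun z => c (Grid q' r' z)) ⁻¹' {i}) (s, lm)
      = ∑ w : (Fin K × Fin K) × (Fin K × Fin K),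
          if c w.1 = lm.1 ∧ c w.2 = lm.2 then A' (w.1.1, w.2.1) * B' (w.1.2, w.2.2) else 0 :=
    fun lm => J_prod_formula μ q' r' hq' hr' c (hα' (e s)) (hβ' (e s)) lm.1 lm.2
  calc ∑ lm : Fin k × Fin k,
      |Mpoint (μ.prod μ) e (fun γ => Prod.map (α γ) (β γ)) t k
          (fun i => (fun z => c (Grid q r z)) ⁻¹' {i}) (s, lm)
        - Mpoint (μ.prod μ) e (fun γ => Prod.map (α' γ) (β' γ)) t k
          (fun i => (fun z => c (Grid q' r' z)) ⁻¹' {i}) (s, lm)|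
      = ∑ lm : Fin k × Fin k,
        |(∑ w : (Fin K × Fin K) × (Fin K × Fin K),
            if c w.1 = lm.1 ∧ c w.2 = lm.2 then A (w.1.1, w.2.1) * B (w.1.2, w.2.2) else 0)
          - ∑ w : (Fin K × Fin K) × (Fin K × Fin K),
            (if c w.1 = lm.1 ∧ c w.2 = lm.2 then A' (w.1.1, w.2.1) * B' (w.1.2, w.2.2) else 0)| :=
        Finset.sum_congr rfl fun lm _ => by rw [e1 lm, e2 lm]
    _ ≤ (∑ w, |A w - A' w|) + ∑ w, |B w - B' w| :=
        slice_est c A A' B B' (fun w => ENNReal.toReal_nonneg) (fun w => ENNReal.toReal_nonneg)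
          (sum_J_eq_one μ hr (hβ (e s))) (sum_J_eq_one μ hq' (hα' (e s)))
    _ = (∑ uu' : Fin K × Fin K,
          |Mpoint μ e α t K (fun i => q ⁻¹' {i}) (s, uu')
            - Mpoint μ e α' t K (fun i => q' ⁻¹' {i}) (s, uu')|)
        + ∑ vv' : Fin K × Fin K,
          |Mpoint μ e β t K (fun i => r ⁻¹' {i}) (s, vv')
            - Mpoint μ e β' t K (fun i => r' ⁻¹' {i}) (s, vv')| := rfl

def GridSets (X : Type*) [MeasurableSpace X] : Set (Set (X × X)) :=
  {S | ∃ (K : ℕ) (q r : X → Fin K), Measurable q ∧ Measurable r ∧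
        ∃ T : Set (Fin K × Fin K), S = Grid q r ⁻¹' T}

lemma measurable_pairify {K₁ K₂ : ℕ} {q₁ : X → Fin K₁} {q₂ : X → Fin K₂}
    (hq₁ : Measurable q₁) (hq₂ : Measurable q₂) :
    Measurable (fun x => finProdFinEquiv (q₁ x, q₂ x)) :=
  (measurable_of_countable _).comp (hq₁.prodMk hq₂)

lemma grid_merge_fst {K₁ K₂ : ℕ} (q₁ r₁ : X → Fin K₁) (q₂ r₂ : X → Fin K₂)
    (T : Set (Fin K₁ × Fin K₁)) :
    Grid q₁ r₁ ⁻¹' T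
      = Grid (fun x => finProdFinEquiv (q₁ x, q₂ x)) (fun x => finProdFinEquiv (r₁ x, r₂ x)) ⁻¹'
        ((fun w : Fin (K₁ * K₂) × Fin (K₁ * K₂) =>
          ((finProdFinEquiv.symm w.1).1, (finProdFinEquiv.symm w.2).1)) ⁻¹' T) := by
  ext z
  simp only [Grid, Set.mem_preimage]
  rw [Equiv.symm_apply_apply, Equiv.symm_apply_apply]

lemma grid_merge_snd {K₁ K₂ : ℕ} (q₁ r₁ : X → Fin K₁) (q₂ r₂ : X → Fin K₂)
    (T : Set (Fin K₂ × Fin K₂)) :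
    Grid q₂ r₂ ⁻¹' T
      = Grid (fun x => finProdFinEquiv (q₁ x, q₂ x)) (fun x => finProdFinEquiv (r₁ x, r₂ x)) ⁻¹'
        ((fun w : Fin (K₁ * K₂) × Fin (K₁ * K₂) =>
          ((finProdFinEquiv.symm w.1).2, (finProdFinEquiv.symm w.2).2)) ⁻¹' T) := by
  ext z
  simp only [Grid, Set.mem_preimage]
  rw [Equiv.symm_apply_apply, Equiv.symm_apply_apply]

lemma isSetAlgebra_gridSets : IsSetAlgebra (GridSets X) where
  empty_mem := ⟨1, fun _ => 0, fun _ => 0, measurable_const, measurable_const, ∅, by simp⟩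
  compl_mem := by
    rintro S ⟨K, q, r, hq, hr, T, rfl⟩
    exact ⟨K, q, r, hq, hr, Tᶜ, by rw [Set.preimage_compl]⟩
  union_mem := by
    rintro S S' ⟨K₁, q₁, r₁, hq₁, hr₁, T₁, rfl⟩ ⟨K₂, q₂, r₂, hq₂, hr₂, T₂, rfl⟩
    refine ⟨K₁ * K₂, fun x => finProdFinEquiv (q₁ x, q₂ x), fun x => finProdFinEquiv (r₁ x, r₂ x),
      measurable_pairify hq₁ hq₂, measurable_pairify hr₁ hr₂,
      ((fun w : Fin (K₁ * K₂) × Fin (K₁ * K₂) =>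
          ((finProdFinEquiv.symm w.1).1, (finProdFinEquiv.symm w.2).1)) ⁻¹' T₁)
        ∪ ((fun w : Fin (K₁ * K₂) × Fin (K₁ * K₂) =>
          ((finProdFinEquiv.symm w.1).2, (finProdFinEquiv.symm w.2).2)) ⁻¹' T₂), ?_⟩
    rw [Set.preimage_union, ← grid_merge_fst, ← grid_merge_snd]

lemma gridSets_gen :
    (Prod.instMeasurableSpace : MeasurableSpace (X × X))
      = MeasurableSpace.generateFrom (GridSets X) := by
  classical
  refine le_antisymm ?_ (MeasurableSpace.generateFrom_le ?_)
  · rw [← generateFrom_prod]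
    refine MeasurableSpace.generateFrom_le ?_
    rintro s ⟨A, hA, B, hB, rfl⟩
    refine MeasurableSpace.measurableSet_generateFrom ?_
    refine ⟨2, fun x => if x ∈ A then (0 : Fin 2) else 1, fun x => if x ∈ B then (0 : Fin 2) else 1,
      Measurable.ite hA measurable_const measurable_const,
      Measurable.ite hB measurable_const measurable_const, {((0 : Fin 2), (0 : Fin 2))}, ?_⟩
    ext z
    simp only [Set.mem_prod, Set.mem_preimage, Grid, Set.mem_singleton_iff, Prod.ext_iff]
    constructor
    · rintro ⟨h1, h2⟩; rw [if_pos h1, if_pos h2]; exact ⟨rfl, rfl⟩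
    · rintro ⟨h1, h2⟩
      constructor
      · by_contra h; rw [if_neg h] at h1; exact absurd h1 (by decide)
      · by_contra h; rw [if_neg h] at h2; exact absurd h2 (by decide)
  · rintro S ⟨K, q, r, hq, hr, T, rfl⟩
    exact measurable_grid hq hr (T.to_countable.measurableSet)

lemma grid_refine_family (n : ℕ) (S : Fin n → Set (X × X)) (hS : ∀ i, S i ∈ GridSets X) :
    ∃ (K : ℕ) (q r : X → Fin K), Measurable q ∧ Measurable r ∧
      ∃ T : Fin n → Set (Fin K × Fin K), ∀ i, S i = Grid q r ⁻¹' T i := by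
  induction n with
  | zero =>
      exact ⟨1, fun _ => 0, fun _ => 0, measurable_const, measurable_const, Fin.elim0,
        fun i => i.elim0⟩
  | succ n ih =>
      obtain ⟨K₁, q₁, r₁, hq₁, hr₁, T₁, hT₁⟩ :=
        ih (fun i => S i.castSucc) (fun i => hS i.castSucc)
      obtain ⟨K₂, q₂, r₂, hq₂, hr₂, T₂, hT₂⟩ := hS (Fin.last n)
      refine ⟨K₁ * K₂, fun x => finProdFinEquiv (q₁ x, q₂ x),
        fun x => finProdFinEquiv (r₁ x, r₂ x),
        measurable_pairify hq₁ hq₂, measurable_pairify hr₁ hr₂,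
        fun i => Fin.lastCases
          ((fun w : Fin (K₁ * K₂) × Fin (K₁ * K₂) =>
            ((finProdFinEquiv.symm w.1).2, (finProdFinEquiv.symm w.2).2)) ⁻¹' T₂)
          (fun j => (fun w : Fin (K₁ * K₂) × Fin (K₁ * K₂) =>
            ((finProdFinEquiv.symm w.1).1, (finProdFinEquiv.symm w.2).1)) ⁻¹' (T₁ j)) i, ?_⟩
      intro i
      induction i using Fin.lastCases with
      | last =>
          simp only [Fin.lastCases_last]
          rw [hT₂]; exact grid_merge_snd q₁ r₁ q₂ r₂ T₂
      | cast j =>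
          simp only [Fin.lastCases_castSucc]
          rw [hT₁ j]; exact grid_merge_fst q₁ r₁ q₂ r₂ (T₁ j)

lemma exists_grid_approx (μ : Measure X) [IsProbabilityMeasure μ] {k : ℕ} (hk : 0 < k)
    {g : X × X → Fin k} (hg : Measurable g) {ε : ℝ} (hε : 0 < ε) :
    ∃ (K : ℕ) (q r : X → Fin K), Measurable q ∧ Measurable r ∧
      ∃ c : Fin K × Fin K → Fin k,
        ∑ l : Fin k, ((μ.prod μ) ((g ⁻¹' {l}) ∆ ((fun z => c (Grid q r z)) ⁻¹' {l}))).toReal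
          < ε := by
  classical
  set ν := μ.prod μ with hν
  set ε' : ℝ := ε / (k * k + 1) with hε'def
  have hε' : 0 < ε' := by positivity
  have hdense : ν.MeasureDense (GridSets X) :=
    Measure.MeasureDense.of_generateFrom_isSetAlgebra_finite ν isSetAlgebra_gridSets gridSets_gen
  have happrox : ∀ l : Fin k, ∃ S ∈ GridSets X, ν ((g ⁻¹' {l}) ∆ S) < ENNReal.ofReal ε' :=
    fun l => hdense.approx _ (hg (measurableSet_singleton l)) (measure_ne_top ν _) ε' hε'
  choose S hSmem hSlt using happrox
  obtain ⟨K, q, r, hq, hr, T, hT⟩ := grid_refine_family k S hSmem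
  set c : Fin K × Fin K → Fin k :=
    fun w => if h : ∃ l, w ∈ T l then h.choose else ⟨0, hk⟩ with hc
  refine ⟨K, q, r, hq, hr, c, ?_⟩
  have hmemS : ∀ (z : X × X) (j : Fin k), z ∈ S j ↔ Grid q r z ∈ T j := by
    intro z j; rw [hT j]; rfl
  have hsub : ∀ l : Fin k, (g ⁻¹' {l}) ∆ ((fun z => c (Grid q r z)) ⁻¹' {l})
      ⊆ ⋃ j, (g ⁻¹' {j}) ∆ (S j) := by
    intro l z hz
    rw [Set.mem_symmDiff] at hz
    rcases hz with ⟨hgl, hcl⟩ | ⟨hcl, hgl⟩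
    · simp only [Set.mem_preimage, Set.mem_singleton_iff] at hgl hcl
      by_cases hex : ∃ j, Grid q r z ∈ T j
      · refine Set.mem_iUnion.2 ⟨c (Grid q r z), ?_⟩
        rw [Set.mem_symmDiff]
        right
        constructor
        · rw [hmemS]
          have := hex.choose_spec
          rw [hc]; simp only [dif_pos hex]
          exact this
        · simp only [Set.mem_preimage, Set.mem_singleton_iff]
          rw [hgl]; exact fun hcontra => hcl (by rw [← hcontra])
      · refine Set.mem_iUnion.2 ⟨l, ?_⟩
        rw [Set.mem_symmDiff]
        left
        refine ⟨by simpa using hgl, ?_⟩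
        rw [hmemS]
        exact fun hTl => hex ⟨l, hTl⟩
    · simp only [Set.mem_preimage, Set.mem_singleton_iff] at hgl hcl
      by_cases hex : ∃ j, Grid q r z ∈ T j
      · refine Set.mem_iUnion.2 ⟨l, ?_⟩
        rw [Set.mem_symmDiff]
        right
        constructor
        · rw [hmemS, ← hcl, hc]
          simp only [dif_pos hex]
          exact hex.choose_spec
        · simpa using hgl
      · refine Set.mem_iUnion.2 ⟨g z, ?_⟩
        rw [Set.mem_symmDiff]
        left
        refine ⟨by simp, ?_⟩
        rw [hmemS]
        exact fun hTgz => hex ⟨g z, hTgz⟩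
  have hbound : ∀ l : Fin k, (ν ((g ⁻¹' {l}) ∆ ((fun z => c (Grid q r z)) ⁻¹' {l}))).toReal
      ≤ ∑ j : Fin k, (ν ((g ⁻¹' {j}) ∆ (S j))).toReal := by
    intro l
    rw [← ENNReal.toReal_sum (fun j _ => measure_ne_top ν _)]
    refine ENNReal.toReal_mono (ENNReal.sum_ne_top.mpr fun j _ => measure_ne_top ν _) ?_
    refine le_trans (measure_mono (hsub l)) ?_
    exact le_trans (measure_iUnion_le _) (le_of_eq (tsum_fintype _))
  have hin : ∑ j : Fin k, (ν ((g ⁻¹' {j}) ∆ (S j))).toReal < k * ε' := by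
    have : Nonempty (Fin k) := ⟨⟨0, hk⟩⟩
    calc ∑ j : Fin k, (ν ((g ⁻¹' {j}) ∆ (S j))).toReal
        < ∑ _j : Fin k, ε' := by
          refine Finset.sum_lt_sum_of_nonempty Finset.univ_nonempty fun j _ =>
            ENNReal.toReal_lt_of_lt_ofReal (hSlt j)
      _ = k * ε' := by simp [mul_comm]
  calc ∑ l : Fin k, (ν ((g ⁻¹' {l}) ∆ ((fun z => c (Grid q r z)) ⁻¹' {l}))).toReal
      ≤ ∑ _l : Fin k, ∑ j : Fin k, (ν ((g ⁻¹' {j}) ∆ (S j))).toReal :=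
        Finset.sum_le_sum fun l _ => hbound l
    _ = k * ∑ j : Fin k, (ν ((g ⁻¹' {j}) ∆ (S j))).toReal := by simp [mul_comm]
    _ < k * (k * ε') := by
        refine mul_lt_mul_of_pos_left hin ?_
        exact_mod_cast hk
    _ ≤ ε := by
        have hcancel : ((k : ℝ) * k + 1) * ε' = ε := by
          rw [hε'def]; field_simp
        nlinarith [hε']

lemma preC_eq_empty {Γ Y : Type*} [Group Γ] [MeasurableSpace Y] [Nonempty Y] (ν : Measure Y)
    (e : ℕ → Γ) (cf : Γ → Y → Y) (t : ℕ) :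
    {x : PiLp 1 (fun _ : Fin t × Fin 0 × Fin 0 => ℝ) |
      ∃ A : Fin 0 → Set Y, IsPartition A ∧ x = Mpoint ν e cf t 0 A} = ∅ := by
  ext x
  simp only [Set.mem_setOf_eq, Set.mem_empty_iff_false, iff_false, not_exists]
  rintro A ⟨hA, -⟩
  obtain ⟨y⟩ := ‹Nonempty Y›
  have : y ∈ ⋃ i, A i := hA.2.2 ▸ Set.mem_univ y
  obtain ⟨i, -⟩ := Set.mem_iUnion.1 this
  exact i.elim0

lemma hausdorffEdist_Cset_le {Γ Y : Type*} [Group Γ] [MeasurableSpace Y] [Nonempty Y]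
    (ν : Measure Y) [IsProbabilityMeasure ν] (e : ℕ → Γ) (cf cf' : Γ → Y → Y)
    (hcf : ∀ γ, Measurable (cf γ)) (hcf' : ∀ γ, Measurable (cf' γ)) (t k : ℕ) :
    hausdorffEDist (Cset ν e cf t k) (Cset ν e cf' t k)
      ≤ ENNReal.ofReal (2 * t) := by
  rcases Nat.eq_zero_or_pos k with rfl | hk
  · simp only [Cset]
    rw [preC_eq_empty ν e cf t, preC_eq_empty ν e cf' t, closure_empty,
      hausdorffEDist_self]
    exact zero_le
  · simp only [Cset]
    rw [hausdorffEDist_closure]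
    refine hausdorffEDist_le_of_mem_edist ?_ ?_
    · rintro x ⟨A, hA, rfl⟩
      refine ⟨Mpoint ν e cf' t k A, ⟨A, hA, rfl⟩, ?_⟩
      obtain ⟨g, hg, hfib⟩ := exists_classifier hA
      have hAe : A = fun i => g ⁻¹' {i} := funext hfib
      rw [hAe, edist_dist]
      exact ENNReal.ofReal_le_ofReal (dist_Mpoint_le_two_t ν e cf cf' hcf hcf' hg)
    · rintro x ⟨A, hA, rfl⟩
      refine ⟨Mpoint ν e cf t k A, ⟨A, hA, rfl⟩, ?_⟩
      obtain ⟨g, hg, hfib⟩ := exists_classifier hA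
      have hAe : A = fun i => g ⁻¹' {i} := funext hfib
      rw [hAe, edist_dist]
      exact ENNReal.ofReal_le_ofReal (dist_Mpoint_le_two_t ν e cf' cf hcf' hcf hg)

lemma hausdorffEdist_Cset_ne_top {Γ Y : Type*} [Group Γ] [MeasurableSpace Y] [Nonempty Y]
    (ν : Measure Y) [IsProbabilityMeasure ν] (e : ℕ → Γ) (cf cf' : Γ → Y → Y)
    (hcf : ∀ γ, Measurable (cf γ)) (hcf' : ∀ γ, Measurable (cf' γ)) (t k : ℕ) :
    hausdorffEDist (Cset ν e cf t k) (Cset ν e cf' t k) ≠ ⊤ :=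
  (lt_of_le_of_lt (hausdorffEdist_Cset_le ν e cf cf' hcf hcf' t k) ENNReal.ofReal_lt_top).ne

lemma hausdorffDist_Cset_le {Γ Y : Type*} [Group Γ] [MeasurableSpace Y] [Nonempty Y]
    (ν : Measure Y) [IsProbabilityMeasure ν] (e : ℕ → Γ) (cf cf' : Γ → Y → Y)
    (hcf : ∀ γ, Measurable (cf γ)) (hcf' : ∀ γ, Measurable (cf' γ)) (t k : ℕ) :
    hausdorffDist (Cset ν e cf t k) (Cset ν e cf' t k) ≤ 2 * t := by
  have h := hausdorffEdist_Cset_le ν e cf cf' hcf hcf' t k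
  have : hausdorffDist (Cset ν e cf t k) (Cset ν e cf' t k)
      = (hausdorffEDist (Cset ν e cf t k) (Cset ν e cf' t k)).toReal := rfl
  rw [this]
  calc (hausdorffEDist (Cset ν e cf t k) (Cset ν e cf' t k)).toReal
      ≤ (ENNReal.ofReal (2 * t)).toReal := ENNReal.toReal_mono ENNReal.ofReal_ne_top h
    _ = 2 * t := ENNReal.toReal_ofReal (by positivity)

lemma infDist_prod_le {Γ : Type*} [Group Γ] [Nonempty X]
    (μ : Measure X) [IsProbabilityMeasure μ] (e : ℕ → Γ)
    {α β α' β' : Γ → X → X}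
    (hα : ∀ γ, MeasurePreserving (α γ) μ μ) (hβ : ∀ γ, MeasurePreserving (β γ) μ μ)
    (hα' : ∀ γ, MeasurePreserving (α' γ) μ μ) (hβ' : ∀ γ, MeasurePreserving (β' γ) μ μ)
    (t : ℕ) {D E : ℝ}
    (hD : ∀ K, hausdorffDist (Cset μ e α t K) (Cset μ e α' t K) ≤ D)
    (hE : ∀ K, hausdorffDist (Cset μ e β t K) (Cset μ e β' t K) ≤ E)
    (k : ℕ) (x : PiLp 1 (fun _ : Fin t × Fin k × Fin k => ℝ))
    (hx : x ∈ {x | ∃ A : Fin k → Set (X × X), IsPartition A ∧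
      x = Mpoint (μ.prod μ) e (fun γ => Prod.map (α γ) (β γ)) t k A}) :
    infDist x (Cset (μ.prod μ) e (fun γ => Prod.map (α' γ) (β' γ)) t k) ≤ D + E := by
  classical
  obtain ⟨A, hA, rfl⟩ := hx
  rcases Nat.eq_zero_or_pos k with rfl | hk
  · exfalso
    obtain ⟨z⟩ : Nonempty (X × X) := inferInstance
    have : z ∈ ⋃ i, A i := hA.2.2 ▸ Set.mem_univ z
    obtain ⟨i, -⟩ := Set.mem_iUnion.1 this
    exact i.elim0
  obtain ⟨g, hgm, hgfib⟩ := exists_classifier hA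
  have hAe : A = fun i => g ⁻¹' {i} := funext hgfib
  subst hAe
  refine le_of_forall_pos_le_add fun ε hε => ?_
  set εA : ℝ := ε / (4 * (t * k) + 4) with hεA
  have hεA0 : 0 < εA := by positivity
  obtain ⟨K, q, r, hq, hr, c, hSg⟩ := exists_grid_approx μ hk hgm hεA0
  set g' : X × X → Fin k := fun z => c (Grid q r z) with hg'
  have hg'm : Measurable g' := (measurable_of_countable c).comp (measurable_grid hq hr)
  have hprod : ∀ γ, MeasurePreserving (Prod.map (α γ) (β γ)) (μ.prod μ) (μ.prod μ) :=
    fun γ => (hα γ).prod (hβ γ)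
  have hprod' : ∀ γ, MeasurePreserving (Prod.map (α' γ) (β' γ)) (μ.prod μ) (μ.prod μ) :=
    fun γ => (hα' γ).prod (hβ' γ)
  have hdist1 : dist
      (Mpoint (μ.prod μ) e (fun γ => Prod.map (α γ) (β γ)) t k (fun i => g ⁻¹' {i}))
      (Mpoint (μ.prod μ) e (fun γ => Prod.map (α γ) (β γ)) t k (fun i => g' ⁻¹' {i}))
      ≤ ε / 2 := by
    refine le_trans (dist_Mpoint_le_symmDiff (μ.prod μ) e _ hprod hgm hg'm) ?_
    have h2 : (0:ℝ) ≤ 2 * t * k := by positivity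
    have hcancel : (4 * ((t:ℝ) * k) + 4) * εA = ε := by
      rw [hεA]; field_simp
    calc 2 * (t:ℝ) * k * ∑ l : Fin k, ((μ.prod μ) ((g ⁻¹' {l}) ∆ (g' ⁻¹' {l}))).toReal
        ≤ 2 * t * k * εA := mul_le_mul_of_nonneg_left hSg.le h2
      _ ≤ ε / 2 := by nlinarith [hεA0]
  set εB : ℝ := ε / 8 with hεB
  have hεB0 : 0 < εB := by positivity
  -- approximate the α-marginal
  have hMq : Mpoint μ e α t K (fun i => q ⁻¹' {i}) ∈ Cset μ e α t K :=
    subset_closure ⟨_, isPartition_fibers hq, rfl⟩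
  obtain ⟨y₁, hy₁, hxy₁⟩ := exists_dist_lt_of_hausdorffDist_lt hMq
    (lt_of_le_of_lt (hD K) (lt_add_of_pos_right D hεB0))
    (hausdorffEdist_Cset_ne_top μ e α α' (fun γ => (hα γ).measurable)
      (fun γ => (hα' γ).measurable) t K)
  rw [Cset] at hy₁
  obtain ⟨z₁, hz₁, hyz₁⟩ := Metric.mem_closure_iff.1 hy₁ εB hεB0
  obtain ⟨A₁, hA₁, rfl⟩ := hz₁
  obtain ⟨q', hq'm, hq'fib⟩ := exists_classifier hA₁
  have hA₁e : A₁ = fun i => q' ⁻¹' {i} := funext hq'fib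
  subst hA₁e
  have hdistα : dist (Mpoint μ e α t K (fun i => q ⁻¹' {i}))
      (Mpoint μ e α' t K (fun i => q' ⁻¹' {i})) ≤ D + 2 * εB := by
    have h3 := dist_triangle (Mpoint μ e α t K (fun i => q ⁻¹' {i})) y₁
      (Mpoint μ e α' t K (fun i => q' ⁻¹' {i}))
    linarith [hxy₁, hyz₁]
  -- approximate the β-marginal
  have hMr : Mpoint μ e β t K (fun i => r ⁻¹' {i}) ∈ Cset μ e β t K :=
    subset_closure ⟨_, isPartition_fibers hr, rfl⟩
  obtain ⟨y₂, hy₂, hxy₂⟩ := exists_dist_lt_of_hausdorffDist_lt hMr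
    (lt_of_le_of_lt (hE K) (lt_add_of_pos_right E hεB0))
    (hausdorffEdist_Cset_ne_top μ e β β' (fun γ => (hβ γ).measurable)
      (fun γ => (hβ' γ).measurable) t K)
  rw [Cset] at hy₂
  obtain ⟨z₂, hz₂, hyz₂⟩ := Metric.mem_closure_iff.1 hy₂ εB hεB0
  obtain ⟨A₂, hA₂, rfl⟩ := hz₂
  obtain ⟨r', hr'm, hr'fib⟩ := exists_classifier hA₂
  have hA₂e : A₂ = fun i => r' ⁻¹' {i} := funext hr'fib
  subst hA₂e
  have hdistβ : dist (Mpoint μ e β t K (fun i => r ⁻¹' {i}))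
      (Mpoint μ e β' t K (fun i => r' ⁻¹' {i})) ≤ E + 2 * εB := by
    have h3 := dist_triangle (Mpoint μ e β t K (fun i => r ⁻¹' {i})) y₂
      (Mpoint μ e β' t K (fun i => r' ⁻¹' {i}))
    linarith [hxy₂, hyz₂]
  -- the target point
  have hg''m : Measurable (fun z : X × X => c (Grid q' r' z)) :=
    (measurable_of_countable c).comp (measurable_grid hq'm hr'm)
  have hMtarget : Mpoint (μ.prod μ) e (fun γ => Prod.map (α' γ) (β' γ)) t k
      (fun i => (fun z : X × X => c (Grid q' r' z)) ⁻¹' {i})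
      ∈ Cset (μ.prod μ) e (fun γ => Prod.map (α' γ) (β' γ)) t k :=
    subset_closure ⟨_, isPartition_fibers hg''m, rfl⟩
  have hdist2 : dist
      (Mpoint (μ.prod μ) e (fun γ => Prod.map (α γ) (β γ)) t k (fun i => g' ⁻¹' {i}))
      (Mpoint (μ.prod μ) e (fun γ => Prod.map (α' γ) (β' γ)) t k
        (fun i => (fun z : X × X => c (Grid q' r' z)) ⁻¹' {i}))
      ≤ (D + 2 * εB) + (E + 2 * εB) := by
    refine le_trans (dist_Mpoint_prod_le μ e hq hr hq'm hr'm c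
      (fun γ => (hα γ).measurable) (fun γ => (hβ γ).measurable)
      (fun γ => (hα' γ).measurable) (fun γ => (hβ' γ).measurable)) ?_
    exact add_le_add hdistα hdistβ
  have hstep := dist_triangle
    (Mpoint (μ.prod μ) e (fun γ => Prod.map (α γ) (β γ)) t k (fun i => g ⁻¹' {i}))
    (Mpoint (μ.prod μ) e (fun γ => Prod.map (α γ) (β γ)) t k (fun i => g' ⁻¹' {i}))
    (Mpoint (μ.prod μ) e (fun γ => Prod.map (α' γ) (β' γ)) t k
      (fun i => (fun z : X × X => c (Grid q' r' z)) ⁻¹' {i}))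
  have hfin : infDist (Mpoint (μ.prod μ) e (fun γ => Prod.map (α γ) (β γ)) t k
      (fun i => g ⁻¹' {i}))
      (Cset (μ.prod μ) e (fun γ => Prod.map (α' γ) (β' γ)) t k)
      ≤ dist (Mpoint (μ.prod μ) e (fun γ => Prod.map (α γ) (β γ)) t k (fun i => g ⁻¹' {i}))
        (Mpoint (μ.prod μ) e (fun γ => Prod.map (α' γ) (β' γ)) t k
          (fun i => (fun z : X × X => c (Grid q' r' z)) ⁻¹' {i})) :=
    infDist_le_dist_of_mem hMtarget
  have hεBval : εB = ε / 8 := hεB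
  linarith [hdist1, hdist2, hstep, hfin]



lemma hausdorffDist_Cset_prod_le {Γ : Type*} [Group Γ] [Nonempty X]
    (μ : Measure X) [IsProbabilityMeasure μ] (e : ℕ → Γ)
    {α β α' β' : Γ → X → X}
    (hα : ∀ γ, MeasurePreserving (α γ) μ μ) (hβ : ∀ γ, MeasurePreserving (β γ) μ μ)
    (hα' : ∀ γ, MeasurePreserving (α' γ) μ μ) (hβ' : ∀ γ, MeasurePreserving (β' γ) μ μ)
    (t : ℕ) {D E : ℝ} (hD0 : 0 ≤ D) (hE0 : 0 ≤ E)
    (hD : ∀ K, hausdorffDist (Cset μ e α t K) (Cset μ e α' t K) ≤ D)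
    (hE : ∀ K, hausdorffDist (Cset μ e β t K) (Cset μ e β' t K) ≤ E) (k : ℕ) :
    hausdorffDist (Cset (μ.prod μ) e (fun γ => Prod.map (α γ) (β γ)) t k)
      (Cset (μ.prod μ) e (fun γ => Prod.map (α' γ) (β' γ)) t k) ≤ D + E := by
  simp only [Cset]
  rw [hausdorffDist_closure]
  refine hausdorffDist_le_of_infDist (add_nonneg hD0 hE0) ?_ ?_
  · intro x hx
    rw [← Metric.infDist_closure]
    exact infDist_prod_le μ e hα hβ hα' hβ' t hD hE k x hx
  · intro x hx
    rw [← Metric.infDist_closure]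
    have hD' : ∀ K, hausdorffDist (Cset μ e α' t K) (Cset μ e α t K) ≤ D := fun K => by
      rw [hausdorffDist_comm]; exact hD K
    have hE' : ∀ K, hausdorffDist (Cset μ e β' t K) (Cset μ e β t K) ≤ E := fun K => by
      rw [hausdorffDist_comm]; exact hE K
    exact infDist_prod_le μ e hα' hβ' hα hβ t hD' hE' k x hx

end S12

theorem stmt_12 {Γ : Type*} [Group Γ] [Countable Γ]
    {X : Type*} [MeasurableSpace X] [StandardBorelSpace X]
    (μ : Measure X) [IsProbabilityMeasure μ]
    (e : ℕ → Γ) (he : Function.Surjective e)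
    (aseq bseq : ℕ → MPAction Γ X μ) (a b : MPAction Γ X μ)
    (ha : ∀ t : ℕ, Tendsto
      (fun n => ⨆ k : ℕ, hausdorffDist (Cset μ e (aseq n).toFun t k) (Cset μ e a.toFun t k))
      atTop (nhds 0))
    (hb : ∀ t : ℕ, Tendsto
      (fun n => ⨆ k : ℕ, hausdorffDist (Cset μ e (bseq n).toFun t k) (Cset μ e b.toFun t k))
      atTop (nhds 0)) :
    ∀ t : ℕ, Tendsto
      (fun n => ⨆ k : ℕ, hausdorffDist
        (Cset (μ.prod μ) e ((aseq n).prod (bseq n)).toFun t k)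
        (Cset (μ.prod μ) e (a.prod b).toFun t k))
      atTop (nhds 0) := by
  have hXne : Nonempty X := by
    by_contra h
    rw [not_nonempty_iff] at h
    have h1 : μ Set.univ = 1 := measure_univ
    rw [Set.univ_eq_empty_iff.2 h, measure_empty] at h1
    exact zero_ne_one h1
  intro t
  set D : ℕ → ℝ := fun n =>
    ⨆ k : ℕ, hausdorffDist (Cset μ e (aseq n).toFun t k) (Cset μ e a.toFun t k) with hDdef
  set E : ℕ → ℝ := fun n =>
    ⨆ k : ℕ, hausdorffDist (Cset μ e (bseq n).toFun t k) (Cset μ e b.toFun t k) with hEdef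
  have hBddA : ∀ n, BddAbove (Set.range fun k : ℕ =>
      hausdorffDist (Cset μ e (aseq n).toFun t k) (Cset μ e a.toFun t k)) := by
    intro n
    refine ⟨2 * t, ?_⟩
    rintro _ ⟨k, rfl⟩
    exact S12.hausdorffDist_Cset_le μ e _ _ (fun γ => ((aseq n).measurePreserving γ).measurable)
      (fun γ => (a.measurePreserving γ).measurable) t k
  have hBddB : ∀ n, BddAbove (Set.range fun k : ℕ =>
      hausdorffDist (Cset μ e (bseq n).toFun t k) (Cset μ e b.toFun t k)) := by
    intro n
    refine ⟨2 * t, ?_⟩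
    rintro _ ⟨k, rfl⟩
    exact S12.hausdorffDist_Cset_le μ e _ _ (fun γ => ((bseq n).measurePreserving γ).measurable)
      (fun γ => (b.measurePreserving γ).measurable) t k
  have hDK : ∀ n K, hausdorffDist (Cset μ e (aseq n).toFun t K) (Cset μ e a.toFun t K) ≤ D n :=
    fun n K => le_ciSup (hBddA n) K
  have hEK : ∀ n K, hausdorffDist (Cset μ e (bseq n).toFun t K) (Cset μ e b.toFun t K) ≤ E n :=
    fun n K => le_ciSup (hBddB n) K
  have hD0 : ∀ n, 0 ≤ D n := fun n => le_trans hausdorffDist_nonneg (hDK n 0)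
  have hE0 : ∀ n, 0 ≤ E n := fun n => le_trans hausdorffDist_nonneg (hEK n 0)
  have key : ∀ n k, hausdorffDist
      (Cset (μ.prod μ) e ((aseq n).prod (bseq n)).toFun t k)
      (Cset (μ.prod μ) e (a.prod b).toFun t k) ≤ D n + E n := fun n k =>
    S12.hausdorffDist_Cset_prod_le μ e (aseq n).measurePreserving (bseq n).measurePreserving
      a.measurePreserving b.measurePreserving t (hD0 n) (hE0 n) (hDK n) (hEK n) k
  refine squeeze_zero (fun n => Real.iSup_nonneg fun k => hausdorffDist_nonneg)
    (fun n => ciSup_le (key n)) ?_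
  simpa using (ha t).add (hb t)

end
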